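/- Let N, h be natural numbers and let R ∈ Matrix (Fin N) (Fin (2*N)) ℚ and C ∈ Matrix (Fin (2*h)) (Fin (2*N)) ℚ be rational matrices satisfying: (a) C * J_{2N} * Cᵀ = 2 • J_{2h} and R * J_{2N} * Cᵀ = 0; (b) for every x : Fin (2*N) → ℂ with (R_ℂ).mulVec x = 0 there exist z : Fin (2*h) → ℂ and w : Fin N → ℂ such that Matrix.vecMul x (J_{2N})_ℂ = Matrix.vecMul z C_ℂ + Matrix.vecMul w R_ℂ. Suppose Z : Fin (2*N) → ℂ and rational vectors d₁ : Fin N → ℚ, d₂ : Fin (2*h) → ℚ satisfy (R_ℂ).mulVec Z = (π * Complex.I) • d₁_ℂ and (C_ℂ).mulVec Z = (π * Complex.I) • d₂_ℂ (where d_ℂ is the vector of d's entries mapped into ℂ). Let V be the quotient ℚ-vector space ℂ ⧸ (ℚ ∙ (2*π*Complex.I)) and let q : ℂ → V be the quotient map. Then Σ_{i : Fin N} q(Z i) ∧ q(Z (N + i)) = 0 in the exterior square Λ²_ℚ V. -/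

import Mathlib

open Matrix

/-- The `2n × 2n` rational matrix with block form `[[0, Iₙ], [−Iₙ, 0]]`. -/
def Jmat (n : ℕ) : Matrix (Fin (2 * n)) (Fin (2 * n)) ℚ :=
  Matrix.of fun i j =>
    if i.1 < n ∧ j.1 = i.1 + n then 1
    else if j.1 < n ∧ i.1 = j.1 + n then -1 else 0

/-- The wedge product `u ∧ w` of two elements of a `ℚ`-vector space `V`,
as an element of the second exterior power `⋀[ℚ]^2 V`. -/
noncomputable def wedge {V : Type*} [AddCommGroup V] [Module ℚ V] (u w : V) :
    ⋀[ℚ]^2 V :=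
  ⟨ExteriorAlgebra.ιMulti ℚ 2 ![u, w],
    ExteriorAlgebra.ιMulti_range ℚ 2 ⟨![u, w], rfl⟩⟩

section aux

set_option linter.unusedSectionVars false

variable {m n : Type*} [Fintype m] [Fintype n] [DecidableEq n]

lemma ortho_ker_range (A : Matrix m n ℚ) {x y : n → ℚ}
    (hx : x ∈ LinearMap.ker A.mulVecLin) (hy : y ∈ LinearMap.range Aᵀ.mulVecLin) :
    y ⬝ᵥ x = 0 := by
  obtain ⟨c, rfl⟩ := hy
  rw [LinearMap.mem_ker, Matrix.mulVecLin_apply] at hx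
  rw [Matrix.mulVecLin_apply, Matrix.mulVec_transpose, ← dotProduct_mulVec, hx,
    dotProduct_zero]

lemma isCompl_ker_range (A : Matrix m n ℚ) :
    IsCompl (LinearMap.ker A.mulVecLin) (LinearMap.range Aᵀ.mulVecLin) := by
  have hdisj : Disjoint (LinearMap.ker A.mulVecLin) (LinearMap.range Aᵀ.mulVecLin) := by
    rw [Submodule.disjoint_def]
    intro x hx hx'
    have := ortho_ker_range A hx hx'
    rwa [dotProduct_self_eq_zero] at this
  refine ⟨hdisj, codisjoint_iff.2 ?_⟩
  have h1 := Submodule.finrank_sup_add_finrank_inf_eq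
    (LinearMap.ker A.mulVecLin) (LinearMap.range Aᵀ.mulVecLin)
  rw [disjoint_iff.1 hdisj, finrank_bot, add_zero] at h1
  apply Submodule.eq_top_of_finrank_eq
  rw [h1]
  have h2 : Module.finrank ℚ (LinearMap.range Aᵀ.mulVecLin)
      = Module.finrank ℚ (LinearMap.range A.mulVecLin) := by
    have := Matrix.rank_transpose A
    rwa [Matrix.rank, Matrix.rank] at this
  rw [h2, add_comm, LinearMap.finrank_range_add_finrank_ker]

end aux

lemma Jmat_transpose (n : ℕ) : (Jmat n)ᵀ = -(Jmat n) := by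
  ext i j
  simp only [Jmat, Matrix.transpose_apply, Matrix.neg_apply, Matrix.of_apply]
  split_ifs <;> first | (exfalso; omega) | norm_num

lemma wedge_coe {V : Type*} [AddCommGroup V] [Module ℚ V] (u w : V) :
    ((wedge u w : ⋀[ℚ]^2 V) : ExteriorAlgebra ℚ V)
      = ExteriorAlgebra.ι ℚ u * ExteriorAlgebra.ι ℚ w := by
  show ExteriorAlgebra.ιMulti ℚ 2 ![u, w] = _
  rw [ExteriorAlgebra.ιMulti_apply]
  simp [List.ofFn_succ]

lemma sum_split {α : Type*} [AddCommMonoid α] (N : ℕ) (f : Fin (2 * N) → α) :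
    (∑ i, f i) = (∑ i : Fin N, f ⟨i.1, by omega⟩) + ∑ i : Fin N, f ⟨N + i.1, by omega⟩ := by
  have h2 : 2 * N = N + N := by omega
  rw [← (finCongr h2.symm).sum_comp f, Fin.sum_univ_add]
  congr 1 <;> exact Finset.sum_congr rfl fun i _ => congrArg f (Fin.ext rfl)

/-- Descent of condition (b) from `ℂ` to `ℚ`. -/
lemma descent {N nh : ℕ} (R : Matrix (Fin N) (Fin (2 * N)) ℚ)
    (C : Matrix (Fin nh) (Fin (2 * N)) ℚ)
    (hb : ∀ x : Fin (2 * N) → ℂ, (R.map (algebraMap ℚ ℂ)).mulVec x = 0 →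
      ∃ (z : Fin nh → ℂ) (w : Fin N → ℂ),
        Matrix.vecMul x ((Jmat N).map (algebraMap ℚ ℂ)) =
          Matrix.vecMul z (C.map (algebraMap ℚ ℂ)) +
            Matrix.vecMul w (R.map (algebraMap ℚ ℂ)))
    (x : Fin (2 * N) → ℚ) (hx : R *ᵥ x = 0) :
    x ᵥ* (Jmat N) ∈ LinearMap.range ((Matrix.fromRows R C)ᵀ).mulVecLin := by
  classical
  set σ : ℚ →+* ℂ := algebraMap ℚ ℂ with hσ
  set M := Matrix.fromRows R C with hM
  have hc := isCompl_ker_range M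
  set u := x ᵥ* (Jmat N) with hu
  have hmem : u ∈ LinearMap.ker M.mulVecLin ⊔ LinearMap.range Mᵀ.mulVecLin := by
    rw [hc.sup_eq_top]; trivial
  obtain ⟨a, ha, b, hbq, hab⟩ := Submodule.mem_sup.1 hmem
  have hMa : M *ᵥ a = 0 := ha
  have hRa : R *ᵥ a = 0 := by
    funext i
    have := congrFun hMa (Sum.inl i)
    rwa [Matrix.fromRows_mulVec] at this
  have hCa : C *ᵥ a = 0 := by
    funext i
    have := congrFun hMa (Sum.inr i)
    rwa [Matrix.fromRows_mulVec] at this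
  have hxc : (R.map σ) *ᵥ (σ ∘ x) = 0 := by
    funext i
    rw [← RingHom.map_mulVec, hx]
    simp
  obtain ⟨z, w, hzw⟩ := hb (σ ∘ x) hxc
  have hua : u ⬝ᵥ a = 0 := by
    have h1 : σ (u ⬝ᵥ a) = 0 := by
      rw [RingHom.map_dotProduct]
      have h2 : σ ∘ u = (σ ∘ x) ᵥ* ((Jmat N).map σ) := by
        funext i; exact RingHom.map_vecMul σ (Jmat N) x i
      have hCa' : (C.map σ) *ᵥ (σ ∘ a) = 0 := by
        funext i; rw [← RingHom.map_mulVec, hCa]; simp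
      have hRa' : (R.map σ) *ᵥ (σ ∘ a) = 0 := by
        funext i; rw [← RingHom.map_mulVec, hRa]; simp
      rw [h2, hzw, add_dotProduct, ← dotProduct_mulVec, ← dotProduct_mulVec,
        hCa', hRa', dotProduct_zero, dotProduct_zero, add_zero]
    have := RingHom.injective σ
    have h0 : σ (u ⬝ᵥ a) = σ 0 := by rw [h1, map_zero]
    exact this h0
  have hba : b ⬝ᵥ a = 0 := ortho_ker_range M ha hbq
  have haa : a ⬝ᵥ a = 0 := by
    have h3 : u ⬝ᵥ a = a ⬝ᵥ a + b ⬝ᵥ a := by rw [← hab, add_dotProduct]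
    rw [hua] at h3
    rw [hba, add_zero] at h3
    exact h3.symm
  have ha0 : a = 0 := dotProduct_self_eq_zero.1 haa
  rw [← hab, ha0, zero_add]
  exact hbq
set_option maxHeartbeats 1600000

theorem complex_Dehn_invariant_vanishes (N h : ℕ)
    (R : Matrix (Fin N) (Fin (2 * N)) ℚ) (C : Matrix (Fin (2 * h)) (Fin (2 * N)) ℚ)
    (ha1 : C * Jmat N * Cᵀ = 2 • Jmat h)
    (ha2 : R * Jmat N * Cᵀ = 0)
    (hb : ∀ x : Fin (2 * N) → ℂ, (R.map (algebraMap ℚ ℂ)).mulVec x = 0 →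
      ∃ (z : Fin (2 * h) → ℂ) (w : Fin N → ℂ),
        Matrix.vecMul x ((Jmat N).map (algebraMap ℚ ℂ)) =
          Matrix.vecMul z (C.map (algebraMap ℚ ℂ)) +
            Matrix.vecMul w (R.map (algebraMap ℚ ℂ)))
    (Z : Fin (2 * N) → ℂ) (d₁ : Fin N → ℚ) (d₂ : Fin (2 * h) → ℚ)
    (hZ1 : (R.map (algebraMap ℚ ℂ)).mulVec Z =
      ((Real.pi : ℂ) * Complex.I) • fun i => algebraMap ℚ ℂ (d₁ i))
    (hZ2 : (C.map (algebraMap ℚ ℂ)).mulVec Z =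
      ((Real.pi : ℂ) * Complex.I) • fun i => algebraMap ℚ ℂ (d₂ i)) :
    ∑ i : Fin N,
      wedge
        ((ℚ ∙ (2 * (Real.pi : ℂ) * Complex.I)).mkQ (Z ⟨i.1, by have := i.isLt; omega⟩))
        ((ℚ ∙ (2 * (Real.pi : ℂ) * Complex.I)).mkQ (Z ⟨N + i.1, by have := i.isLt; omega⟩)) =
      0 := by
  classical
  set σ : ℚ →+* ℂ := algebraMap ℚ ℂ with hσ
  set M := Matrix.fromRows R C with hM
  set U : Submodule ℚ (Fin (2 * N) → ℚ) := LinearMap.range Mᵀ.mulVecLin with hU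
  -- the row space of R is contained in U
  have hRU : LinearMap.range Rᵀ.mulVecLin ≤ U := by
    rintro y ⟨c, rfl⟩
    exact ⟨Sum.elim c 0, by
      simp only [Matrix.mulVecLin_apply, Matrix.mulVec_transpose, hM,
        Matrix.sumElim_vecMul_fromRows, Matrix.zero_vecMul, add_zero]⟩
  -- the projection onto ker R along the row space of R
  have hc := isCompl_ker_range R
  set Pl : (Fin (2 * N) → ℚ) →ₗ[ℚ] (Fin (2 * N) → ℚ) :=
    (LinearMap.ker R.mulVecLin).subtype ∘ₗ
      Submodule.linearProjOfIsCompl _ _ hc with hPl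
  have hPl1 : ∀ v, Pl v ∈ LinearMap.ker R.mulVecLin := fun v => Submodule.coe_mem _
  have hPlid : ∀ v, v ∈ LinearMap.ker R.mulVecLin → Pl v = v := by
    intro v hv
    simp only [hPl, LinearMap.comp_apply, Submodule.subtype_apply]
    exact congrArg Subtype.val (Submodule.linearProjOfIsCompl_apply_left hc ⟨v, hv⟩)
  have hPl2 : ∀ v, v - Pl v ∈ LinearMap.range Rᵀ.mulVecLin := by
    intro v
    rw [← Submodule.linearProjOfIsCompl_apply_eq_zero_iff hc (x := v - Pl v)]
    have : Pl (v - Pl v) = 0 := by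
      rw [map_sub, hPlid _ (hPl1 v), sub_self]
    have h5 : ((Submodule.linearProjOfIsCompl _ _ hc) (v - Pl v) :
        Fin (2 * N) → ℚ) = 0 := this
    exact Subtype.ext h5
  have hPlsym : ∀ v u, Pl v ⬝ᵥ u = v ⬝ᵥ Pl u := by
    intro v u
    have e1 : Pl v ⬝ᵥ u = Pl v ⬝ᵥ Pl u := by
      have : Pl v ⬝ᵥ (u - Pl u) = 0 := by
        rw [dotProduct_comm]
        exact ortho_ker_range R (hPl1 v) (hPl2 u)
      calc Pl v ⬝ᵥ u = Pl v ⬝ᵥ (Pl u + (u - Pl u)) := by rw [add_sub_cancel]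
      _ = Pl v ⬝ᵥ Pl u + Pl v ⬝ᵥ (u - Pl u) := by rw [dotProduct_add]
      _ = Pl v ⬝ᵥ Pl u := by rw [this, add_zero]
    have e2 : v ⬝ᵥ Pl u = Pl v ⬝ᵥ Pl u := by
      have : (v - Pl v) ⬝ᵥ Pl u = 0 := ortho_ker_range R (hPl1 u) (hPl2 v)
      calc v ⬝ᵥ Pl u = (Pl v + (v - Pl v)) ⬝ᵥ Pl u := by rw [add_sub_cancel]
      _ = Pl v ⬝ᵥ Pl u + (v - Pl v) ⬝ᵥ Pl u := by rw [add_dotProduct]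
      _ = Pl v ⬝ᵥ Pl u := by rw [this, add_zero]
    rw [e1, e2]
  set Pm : Matrix (Fin (2 * N)) (Fin (2 * N)) ℚ := LinearMap.toMatrix' Pl with hPm
  have hPmv : ∀ v, Pm *ᵥ v = Pl v := by
    intro v
    rw [← Matrix.toLin'_apply, hPm, Matrix.toLin'_toMatrix']
  have hPmsym : Pmᵀ = Pm := by
    ext i j
    rw [Matrix.transpose_apply]
    have e : ∀ i j : Fin (2 * N), Pm i j = Pl (Pi.single j 1) i := by
      intro i j
      rw [hPm, LinearMap.toMatrix'_apply]
    rw [e, e]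
    have := hPlsym (Pi.single i 1) (Pi.single j 1)
    rwa [dotProduct_single, single_dotProduct, mul_one, one_mul] at this
  -- the matrix A
  set A : Matrix (Fin (2 * N)) (Fin (2 * N)) ℚ :=
    (1 / 2 : ℚ) • (Jmat N * Pm + (1 - Pm) * Jmat N) with hA
  have hAJ : A - Aᵀ = Jmat N := by
    have hJt := Jmat_transpose N
    rw [hA, Matrix.transpose_smul, Matrix.transpose_add, Matrix.transpose_mul,
      Matrix.transpose_mul, Matrix.transpose_sub, Matrix.transpose_one, hPmsym, hJt,
      ← smul_sub]
    have hexp : (Jmat N * Pm + (1 - Pm) * Jmat N) - (Pm * -Jmat N + -Jmat N * (1 - Pm))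
        = Jmat N + Jmat N := by noncomm_ring
    rw [hexp, smul_add, ← add_smul]
    norm_num
  have hdesc : ∀ v : Fin (2 * N) → ℚ, R *ᵥ v = 0 → Jmat N *ᵥ v ∈ U := by
    intro v hv
    have h1 := descent R C hb v hv
    have h2 : Jmat N *ᵥ v = -(v ᵥ* Jmat N) := by
      rw [← Matrix.vecMul_transpose, Jmat_transpose, Matrix.vecMul_neg]
    rw [h2]
    exact U.neg_mem h1
  have hAcol : ∀ j, (fun i => A i j) ∈ U := by
    intro j
    have hcol : (fun i => A i j) = A *ᵥ Pi.single j 1 := by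
      funext i
      simp [Matrix.mulVec_single]
    rw [hcol, hA, Matrix.smul_mulVec, Matrix.add_mulVec,
      ← Matrix.mulVec_mulVec, ← Matrix.mulVec_mulVec]
    refine U.smul_mem _ (U.add_mem ?_ ?_)
    · rw [hPmv]
      refine hdesc _ ?_
      have := hPl1 (Pi.single j 1)
      rwa [LinearMap.mem_ker, Matrix.mulVecLin_apply] at this
    · rw [Matrix.sub_mulVec, Matrix.one_mulVec, hPmv]
      exact hRU (hPl2 _)
  have hUker : ∀ u, u ∈ U → (∑ i, u i • Z i) ∈ (ℚ ∙ (2 * (Real.pi : ℂ) * Complex.I)) := by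
    rintro u ⟨c, rfl⟩
    have hgen : ∀ d : ℚ, (Real.pi : ℂ) * Complex.I * σ d
        ∈ (ℚ ∙ (2 * (Real.pi : ℂ) * Complex.I)) := by
      intro d
      refine Submodule.mem_span_singleton.2 ⟨d / 2, ?_⟩
      rw [Rat.smul_def, eq_ratCast σ d]
      push_cast
      ring
    have hrow : ∀ k : Fin N ⊕ Fin (2 * h),
        (∑ i, M k i • Z i) ∈ (ℚ ∙ (2 * (Real.pi : ℂ) * Complex.I)) := by
      intro k
      cases k with
      | inl a =>
        have he : (∑ i, M (Sum.inl a) i • Z i) = ((R.map σ) *ᵥ Z) a := by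
          simp [hM, Matrix.mulVec, dotProduct, Matrix.map_apply, Algebra.smul_def]
        rw [he, hZ1]
        simpa using hgen (d₁ a)
      | inr a =>
        have he : (∑ i, M (Sum.inr a) i • Z i) = ((C.map σ) *ᵥ Z) a := by
          simp [hM, Matrix.mulVec, dotProduct, Matrix.map_apply, Algebra.smul_def]
        rw [he, hZ2]
        simpa using hgen (d₂ a)
    have hui : ∀ i, Mᵀ.mulVecLin c i = ∑ k, c k * M k i := by
      intro i
      rw [Matrix.mulVecLin_apply, Matrix.mulVec_transpose]
      simp [Matrix.vecMul, dotProduct]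
    have heq : (∑ i, Mᵀ.mulVecLin c i • Z i) = ∑ k, c k • (∑ i, M k i • Z i) := by
      calc (∑ i, Mᵀ.mulVecLin c i • Z i) = ∑ i, ∑ k, (c k * M k i) • Z i := by
            refine Finset.sum_congr rfl fun i _ => ?_
            rw [hui, Finset.sum_smul]
      _ = ∑ k, ∑ i, (c k * M k i) • Z i := Finset.sum_comm
      _ = ∑ k, c k • (∑ i, M k i • Z i) := by
            refine Finset.sum_congr rfl fun k _ => ?_
            rw [Finset.smul_sum]
            exact Finset.sum_congr rfl fun i _ => (mul_smul _ _ _)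
    rw [show (∑ i, (Mᵀ.mulVecLin c) i • Z i) = ∑ k, c k • (∑ i, M k i • Z i) from heq]
    exact Submodule.sum_smul_mem _ _ (fun k _ => hrow k)
  -- pass to the quotient and the exterior algebra
  set sp : Submodule ℚ ℂ := ℚ ∙ (2 * (Real.pi : ℂ) * Complex.I) with hsp
  set y : Fin (2 * N) → (ℂ ⧸ sp) := fun i => sp.mkQ (Z i) with hy
  set xE : Fin (2 * N) → ExteriorAlgebra ℚ (ℂ ⧸ sp) := fun i => ExteriorAlgebra.ι ℚ (y i)
    with hxE
  have hswap : ∀ i j : Fin (2 * N), xE j * xE i = -(xE i * xE j) := fun i j =>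
    eq_neg_of_add_eq_zero_right (ExteriorAlgebra.ι_add_mul_swap (y i) (y j))
  have hcol0 : ∀ j : Fin (2 * N), (∑ i, A i j • xE i) = 0 := by
    intro j
    have h1 : (∑ i, A i j • y i) = 0 := by
      have h2 : (∑ i, A i j • y i) = sp.mkQ (∑ i, A i j • Z i) := by
        rw [map_sum]
        exact Finset.sum_congr rfl fun i _ => (_root_.map_smul _ _ _).symm
      rw [h2, Submodule.mkQ_apply, Submodule.Quotient.mk_eq_zero]
      exact hUker _ (hAcol j)
    have h3 : (∑ i, A i j • xE i) = ExteriorAlgebra.ι ℚ (∑ i, A i j • y i) := by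
      rw [map_sum]
      exact Finset.sum_congr rfl fun i _ => (_root_.map_smul _ _ _).symm
    rw [h3, h1, map_zero]
  have hSA : (∑ i, ∑ j, A i j • (xE i * xE j)) = 0 := by
    rw [Finset.sum_comm]
    refine Finset.sum_eq_zero fun j _ => ?_
    have h4 : (∑ i, A i j • (xE i * xE j)) = (∑ i, A i j • xE i) * xE j := by
      rw [Finset.sum_mul]
      exact Finset.sum_congr rfl fun i _ => (smul_mul_assoc _ _ _).symm
    rw [h4, hcol0, zero_mul]
  have hT0 : (∑ i, ∑ j, Jmat N i j • (xE i * xE j)) = 0 := by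
    have hJA : ∀ i j, Jmat N i j = A i j - A j i := by
      intro i j
      rw [← hAJ, Matrix.sub_apply, Matrix.transpose_apply]
    have hsplit : (∑ i, ∑ j, Jmat N i j • (xE i * xE j))
        = (∑ i, ∑ j, A i j • (xE i * xE j)) - ∑ i, ∑ j, A j i • (xE i * xE j) := by
      rw [← Finset.sum_sub_distrib]
      refine Finset.sum_congr rfl fun i _ => ?_
      rw [← Finset.sum_sub_distrib]
      exact Finset.sum_congr rfl fun j _ => by rw [hJA, sub_smul]
    have hsec : (∑ i, ∑ j, A j i • (xE i * xE j))
        = -(∑ i, ∑ j, A i j • (xE i * xE j)) := by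
      calc (∑ i, ∑ j, A j i • (xE i * xE j))
          = ∑ i, ∑ j, A i j • (xE j * xE i) := Finset.sum_comm
        _ = ∑ i, ∑ j, -(A i j • (xE i * xE j)) := by
            refine Finset.sum_congr rfl fun i _ => Finset.sum_congr rfl fun j _ => ?_
            rw [hswap, smul_neg]
        _ = -(∑ i, ∑ j, A i j • (xE i * xE j)) := by
            simp only [Finset.sum_neg_distrib]
    rw [hsplit, hsec, hSA]
    simp
  -- evaluate the double sum directly
  have hrow1 : ∀ i : Fin N,
      (∑ j, Jmat N ⟨i.1, by omega⟩ j • (xE ⟨i.1, by omega⟩ * xE j))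
        = xE ⟨i.1, by omega⟩ * xE ⟨N + i.1, by omega⟩ := by
    intro i
    have hJ : ∀ j : Fin (2 * N), Jmat N ⟨i.1, by omega⟩ j
        = if j = (⟨N + i.1, by omega⟩ : Fin (2 * N)) then 1 else 0 := by
      intro j
      simp only [Jmat, Matrix.of_apply]
      by_cases hj : j = (⟨N + i.1, by omega⟩ : Fin (2 * N))
      · subst hj
        rw [if_pos rfl, if_pos]
        exact ⟨i.isLt, by show N + i.1 = i.1 + N; omega⟩
      · rw [if_neg hj, if_neg, if_neg]
        · rintro ⟨h1, h2⟩
          have hi := i.isLt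
          have h2' : i.1 = j.1 + N := h2
          omega
        · rintro ⟨h1, h2⟩
          apply hj
          apply Fin.ext
          have h2' : j.1 = i.1 + N := h2
          show j.1 = N + i.1
          omega
    calc (∑ j, Jmat N ⟨i.1, by omega⟩ j • (xE ⟨i.1, by omega⟩ * xE j))
        = ∑ j, (if j = (⟨N + i.1, by omega⟩ : Fin (2 * N)) then
            xE ⟨i.1, by omega⟩ * xE j else 0) := by
          refine Finset.sum_congr rfl fun j _ => ?_
          rw [hJ]
          split_ifs with hj
          · rw [one_smul]
          · rw [zero_smul]
      _ = xE ⟨i.1, by omega⟩ * xE ⟨N + i.1, by omega⟩ := by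
          rw [Finset.sum_ite_eq']
          exact if_pos (Finset.mem_univ _)
  have hrow2 : ∀ i : Fin N,
      (∑ j, Jmat N ⟨N + i.1, by omega⟩ j • (xE ⟨N + i.1, by omega⟩ * xE j))
        = -(xE ⟨N + i.1, by omega⟩ * xE ⟨i.1, by omega⟩) := by
    intro i
    have hJ : ∀ j : Fin (2 * N), Jmat N ⟨N + i.1, by omega⟩ j
        = if j = (⟨i.1, by omega⟩ : Fin (2 * N)) then -1 else 0 := by
      intro j
      simp only [Jmat, Matrix.of_apply]
      by_cases hj : j = (⟨i.1, by omega⟩ : Fin (2 * N))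
      · subst hj
        rw [if_pos rfl, if_neg, if_pos]
        · exact ⟨i.isLt, by show N + i.1 = i.1 + N; omega⟩
        · rintro ⟨h1, h2⟩
          have h1' : N + i.1 < N := h1
          omega
      · rw [if_neg hj, if_neg, if_neg]
        · rintro ⟨h1, h2⟩
          apply hj
          apply Fin.ext
          have hi := i.isLt
          have h2' : N + i.1 = j.1 + N := h2
          show j.1 = i.1
          omega
        · rintro ⟨h1, h2⟩
          have h1' : N + i.1 < N := h1
          omega
    calc (∑ j, Jmat N ⟨N + i.1, by omega⟩ j • (xE ⟨N + i.1, by omega⟩ * xE j))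
        = ∑ j, (if j = (⟨i.1, by omega⟩ : Fin (2 * N)) then
            -(xE ⟨N + i.1, by omega⟩ * xE j) else 0) := by
          refine Finset.sum_congr rfl fun j _ => ?_
          rw [hJ]
          split_ifs with hj
          · rw [neg_smul, one_smul]
          · rw [zero_smul]
      _ = -(xE ⟨N + i.1, by omega⟩ * xE ⟨i.1, by omega⟩) := by
          rw [Finset.sum_ite_eq']
          exact if_pos (Finset.mem_univ _)
  have hT0' : (∑ i : Fin N, xE ⟨i.1, by omega⟩ * xE ⟨N + i.1, by omega⟩)
      + (∑ i : Fin N, xE ⟨i.1, by omega⟩ * xE ⟨N + i.1, by omega⟩) = 0 := by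
    have hTsplit := sum_split N (fun i => ∑ j, Jmat N i j • (xE i * xE j))
    rw [hTsplit] at hT0
    rw [Finset.sum_congr rfl (fun i _ => hrow1 i),
      Finset.sum_congr rfl (fun i _ => hrow2 i)] at hT0
    have hneg : (∑ i : Fin N, -(xE ⟨N + i.1, by omega⟩ * xE ⟨i.1, by omega⟩))
        = ∑ i : Fin N, xE ⟨i.1, by omega⟩ * xE ⟨N + i.1, by omega⟩ := by
      refine Finset.sum_congr rfl fun i _ => ?_
      rw [hswap, neg_neg]
    rwa [hneg] at hT0
  have hS : (∑ i : Fin N, xE ⟨i.1, by omega⟩ * xE ⟨N + i.1, by omega⟩) = 0 := by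
    have h2S : (2 : ℚ) • (∑ i : Fin N, xE ⟨i.1, by omega⟩ * xE ⟨N + i.1, by omega⟩) = 0 := by
      rw [two_smul]
      exact hT0'
    have := smul_eq_zero.1 h2S
    rcases this with hl | hr
    · norm_num at hl
    · exact hr
  apply Subtype.ext
  rw [AddSubmonoidClass.coe_finset_sum]
  calc (∑ i : Fin N, ((wedge (sp.mkQ (Z ⟨i.1, by have := i.isLt; omega⟩))
        (sp.mkQ (Z ⟨N + i.1, by have := i.isLt; omega⟩)) : ⋀[ℚ]^2 (ℂ ⧸ sp)) :
          ExteriorAlgebra ℚ (ℂ ⧸ sp)))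
      = ∑ i : Fin N, xE ⟨i.1, by omega⟩ * xE ⟨N + i.1, by omega⟩ :=
        Finset.sum_congr rfl fun i _ => wedge_coe _ _
    _ = ((0 : ⋀[ℚ]^2 (ℂ ⧸ sp)) : ExteriorAlgebra ℚ (ℂ ⧸ sp)) := by rw [hS]; simp
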